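/- The coproduct Δ on the Ringel-Hall algebra H_LRF of labeled rooted forests, defined by Δ(f)(F, G) = f(F ⊕ G), is coassociative, cocommutative, and a homomorphism with respect to the convolution product, making H_LRF a cocommutative bialgebra (and, being graded connected, a Hopf algebra). -/

import Mathlib

attribute [local instance] Classical.propDecidable

noncomputable section

/-- A labeled rooted forest: a finite set of vertex labels together with a
parent function (`none` = root), acyclic via a depth function. -/
structure Forest where
  verts : Finset ℕ
  parent : ℕ → Option ℕ
  parent_mem : ∀ v ∈ verts, ∀ p, parent v = some p → p ∈ verts
  wf : ∃ d : ℕ → ℕ, ∀ v ∈ verts, ∀ p, parent v = some p → d p < d v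

namespace Forest

/-- `S` is the vertex set of a subforest of `F` (the branches `P_C(F)` severed by an
admissible cut `C`): a subset of the vertices closed under passing to children. -/
def IsSub (F : Forest) (S : Finset ℕ) : Prop :=
  S ⊆ F.verts ∧ ∀ v ∈ S, ∀ w ∈ F.verts, F.parent w = some v → w ∈ S

/-- The subforest `P_C(F)` determined by the (descendant-closed) vertex set `S`. -/
def restrict (F : Forest) (S : Finset ℕ) : Forest where
  verts := S ∩ F.verts
  parent v := (F.parent v).bind fun p =>
    if v ∈ S ∩ F.verts ∧ p ∈ S ∩ F.verts then some p else none
  parent_mem := by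
    intro v hv p hp
    beta_reduce at hp
    cases h : F.parent v with
    | none => rw [h] at hp; simp at hp
    | some q =>
      rw [h] at hp
      simp only [Option.bind_some] at hp
      split at hp
      · rename_i hc; cases hp; exact hc.2
      · simp at hp
  wf := by
    obtain ⟨d, hd⟩ := F.wf
    refine ⟨d, ?_⟩
    intro v hv p hp
    beta_reduce at hp
    cases h : F.parent v with
    | none => rw [h] at hp; simp at hp
    | some q =>
      rw [h] at hp
      simp only [Option.bind_some] at hp
      split at hp
      · rename_i hc; cases hp
        exact hd v (Finset.mem_inter.mp hv).2 _ h
      · simp at hp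

/-- The root part `R_C(F) = F/P_C(F)` determined by the severed vertex set `S`. -/
def quot (F : Forest) (S : Finset ℕ) : Forest where
  verts := F.verts \ S
  parent v := (F.parent v).bind fun p =>
    if v ∈ F.verts \ S ∧ p ∈ F.verts \ S then some p else none
  parent_mem := by
    intro v hv p hp
    beta_reduce at hp
    cases h : F.parent v with
    | none => rw [h] at hp; simp at hp
    | some q =>
      rw [h] at hp
      simp only [Option.bind_some] at hp
      split at hp
      · rename_i hc; cases hp; exact hc.2
      · simp at hp
  wf := by
    obtain ⟨d, hd⟩ := F.wf
    refine ⟨d, ?_⟩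
    intro v hv p hp
    beta_reduce at hp
    cases h : F.parent v with
    | none => rw [h] at hp; simp at hp
    | some q =>
      rw [h] at hp
      simp only [Option.bind_some] at hp
      split at hp
      · rename_i hc; cases hp
        exact hd v (Finset.mem_sdiff.mp hv).1 _ h
      · simp at hp

/-- `φ` realizes an isomorphism of labeled rooted forests (a root- and
incidence-preserving bijection on labels). -/
def IsoMap (F G : Forest) (φ : ℕ → ℕ) : Prop :=
  Set.BijOn φ (F.verts : Set ℕ) (G.verts : Set ℕ) ∧
    ∀ v ∈ F.verts, (F.parent v).map φ = G.parent (φ v)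

/-- Isomorphism of labeled rooted forests. -/
def Iso (F G : Forest) : Prop := ∃ φ, IsoMap F G φ

/-- A function on forests which only depends on the isomorphism class. -/
def Invariant (f : Forest → ℚ) : Prop := ∀ F G, Iso F G → f F = f G

/-- A function on forests supported on finitely many isomorphism classes. -/
def FinSupp (f : Forest → ℚ) : Prop :=
  ∃ s : Finset Forest, ∀ F, f F ≠ 0 → ∃ G ∈ s, Iso F G

/-- The Ringel-Hall convolution product:
`(f × g)(F) = ∑_{G ⊆ F} f(G) · g(F/G)`, the sum running over subforests of `F`. -/
def conv (f g : Forest → ℚ) : Forest → ℚ := fun F =>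
  ∑ S ∈ F.verts.powerset, if F.IsSub S then f (F.restrict S) * g (F.quot S) else 0

end Forest

end

namespace Forest

/-- The empty forest (zero object of `LRF`). -/
def emptyForest : Forest :=
  ⟨∅, fun _ => none, by simp, ⟨id, by simp⟩⟩

/-- The direct sum (disjoint union) `F ⊕ G` of two forests, realized by
relabeling `F` by even and `G` by odd natural numbers. -/
def oplus (F G : Forest) : Forest where
  verts := F.verts.image (fun v => 2 * v) ∪ G.verts.image (fun v => 2 * v + 1)
  parent v :=
    if v % 2 = 0 ∧ v / 2 ∈ F.verts then (F.parent (v / 2)).map (fun p => 2 * p)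
    else if v % 2 = 1 ∧ v / 2 ∈ G.verts then (G.parent (v / 2)).map (fun p => 2 * p + 1)
    else none
  parent_mem := by
    intro v hv p hp
    beta_reduce at hp
    split at hp
    · rename_i hc
      obtain ⟨q, hq, rfl⟩ := Option.map_eq_some_iff.mp hp
      exact Finset.mem_union_left _ (Finset.mem_image_of_mem _ (F.parent_mem _ hc.2 _ hq))
    · split at hp
      · rename_i hc
        obtain ⟨q, hq, rfl⟩ := Option.map_eq_some_iff.mp hp
        exact Finset.mem_union_right _ (Finset.mem_image_of_mem _ (G.parent_mem _ hc.2 _ hq))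
      · simp at hp
  wf := by
    obtain ⟨dF, hdF⟩ := F.wf
    obtain ⟨dG, hdG⟩ := G.wf
    refine ⟨fun v => if v % 2 = 0 then dF (v / 2) else dG (v / 2), ?_⟩
    intro v hv p hp
    beta_reduce at hp
    split at hp
    · rename_i hc
      obtain ⟨q, hq, rfl⟩ := Option.map_eq_some_iff.mp hp
      have h1 : (2 * q) % 2 = 0 := by omega
      have h2 : (2 * q) / 2 = q := by omega
      simp only [h1, h2, hc.1, if_true]
      exact hdF _ hc.2 _ hq
    · split at hp
      · rename_i hc
        obtain ⟨q, hq, rfl⟩ := Option.map_eq_some_iff.mp hp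
        have h1 : (2 * q + 1) % 2 ≠ 0 := by omega
        have h2 : (2 * q + 1) / 2 = q := by omega
        have h3 : v % 2 ≠ 0 := by omega
        simp only [h2, if_neg h1, if_neg h3]
        exact hdG _ hc.2 _ hq
      · simp at hp

/-- The characteristic function of the empty forest: the unit of `H_LRF` and
(in the second argument) the counit. -/
noncomputable def unitF : Forest → ℚ := fun F => if F.verts = ∅ then 1 else 0

/-- The characteristic function `δ_T` of the isomorphism class of `T`. -/
noncomputable def delta (T : Forest) : Forest → ℚ :=
  fun F => if Iso F T then 1 else 0

end Forest

namespace Forest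

/-- The componentwise convolution product on functions of two forests
(the product of `H_LRF ⊗ H_LRF`). -/
noncomputable def conv2 (u w : Forest → Forest → ℚ) : Forest → Forest → ℚ :=
  fun A B =>
    ∑ S ∈ A.verts.powerset, ∑ T ∈ B.verts.powerset,
      if A.IsSub S ∧ B.IsSub T then
        u (A.restrict S) (B.restrict T) * w (A.quot S) (B.quot T)
      else 0

end Forest

namespace Forest

lemma mem_oplus {A B : Forest} {n : ℕ} :
    n ∈ (oplus A B).verts ↔ (n % 2 = 0 ∧ n / 2 ∈ A.verts) ∨ (n % 2 = 1 ∧ n / 2 ∈ B.verts) := by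
  simp only [oplus, Finset.mem_union, Finset.mem_image]
  constructor
  · rintro (⟨v, hv, rfl⟩ | ⟨v, hv, rfl⟩)
    · exact Or.inl ⟨by omega, by rw [show 2 * v / 2 = v from by omega]; exact hv⟩
    · exact Or.inr ⟨by omega, by rw [show (2 * v + 1) / 2 = v from by omega]; exact hv⟩
  · rintro (⟨h1, h2⟩ | ⟨h1, h2⟩)
    · exact Or.inl ⟨n / 2, h2, by omega⟩
    · exact Or.inr ⟨n / 2, h2, by omega⟩

lemma mem_oplus_even {A B : Forest} {a : ℕ} : 2 * a ∈ (oplus A B).verts ↔ a ∈ A.verts := by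
  rw [mem_oplus]
  constructor
  · rintro (⟨h1, h2⟩ | ⟨h1, h2⟩)
    · rwa [show 2 * a / 2 = a from by omega] at h2
    · omega
  · intro h
    exact Or.inl ⟨by omega, by rwa [show 2 * a / 2 = a from by omega]⟩

lemma mem_oplus_odd {A B : Forest} {b : ℕ} : 2 * b + 1 ∈ (oplus A B).verts ↔ b ∈ B.verts := by
  rw [mem_oplus]
  constructor
  · rintro (⟨h1, h2⟩ | ⟨h1, h2⟩)
    · omega
    · rwa [show (2 * b + 1) / 2 = b from by omega] at h2
  · intro h
    exact Or.inr ⟨by omega, by rwa [show (2 * b + 1) / 2 = b from by omega]⟩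

lemma oplus_parent_even {A B : Forest} {a : ℕ} (ha : a ∈ A.verts) :
    (oplus A B).parent (2 * a) = (A.parent a).map (fun p => 2 * p) := by
  show (if (2 * a) % 2 = 0 ∧ (2 * a) / 2 ∈ A.verts then (A.parent ((2 * a) / 2)).map _
      else if (2 * a) % 2 = 1 ∧ (2 * a) / 2 ∈ B.verts then _ else none) = _
  rw [show 2 * a / 2 = a from by omega, if_pos ⟨by omega, ha⟩]

lemma oplus_parent_odd {A B : Forest} {b : ℕ} (hb : b ∈ B.verts) :
    (oplus A B).parent (2 * b + 1) = (B.parent b).map (fun p => 2 * p + 1) := by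
  show (if (2 * b + 1) % 2 = 0 ∧ (2 * b + 1) / 2 ∈ A.verts then _
      else if (2 * b + 1) % 2 = 1 ∧ (2 * b + 1) / 2 ∈ B.verts then
        (B.parent ((2 * b + 1) / 2)).map _ else none) = _
  rw [show (2 * b + 1) / 2 = b from by omega, if_neg (by omega), if_pos ⟨by omega, hb⟩]

lemma iso_of_eq {F G : Forest} (h1 : F.verts = G.verts)
    (h2 : ∀ v ∈ F.verts, F.parent v = G.parent v) : Iso F G := by
  refine ⟨id, ?_, ?_⟩
  · have : (F.verts : Set ℕ) = (G.verts : Set ℕ) := by rw [h1]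
    rw [this]
    exact Set.bijOn_id _
  · intro v hv
    rw [h2 v hv]; exact congrFun Option.map_id _

end Forest

namespace Forest

lemma iso_oplus_comm (A B : Forest) : Iso (oplus A B) (oplus B A) := by
  refine ⟨fun n => if n % 2 = 0 then n + 1 else n - 1, ⟨?_, ?_, ?_⟩, ?_⟩
  · intro n hn
    have hn' := mem_oplus.mp (Finset.mem_coe.mp hn)
    simp only [Set.mem_setOf_eq, Finset.mem_coe]
    rcases hn' with ⟨h1, h2⟩ | ⟨h1, h2⟩
    · rw [if_pos h1]
      apply mem_oplus.mpr
      exact Or.inr ⟨by omega, by rwa [show (n + 1) / 2 = n / 2 from by omega]⟩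
    · rw [if_neg (by omega)]
      apply mem_oplus.mpr
      exact Or.inl ⟨by omega, by rwa [show (n - 1) / 2 = n / 2 from by omega]⟩
  · intro x _ y _ hxy
    simp only at hxy
    split_ifs at hxy <;> omega
  · intro m hm
    have hm' := mem_oplus.mp (Finset.mem_coe.mp hm)
    rcases hm' with ⟨h1, h2⟩ | ⟨h1, h2⟩
    · refine ⟨m + 1, ?_, ?_⟩
      · exact Finset.mem_coe.mpr (mem_oplus.mpr (Or.inr ⟨by omega,
          by rwa [show (m + 1) / 2 = m / 2 from by omega]⟩))
      · beta_reduce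
        rw [if_neg (by omega)]
        omega
    · refine ⟨m - 1, ?_, ?_⟩
      · exact Finset.mem_coe.mpr (mem_oplus.mpr (Or.inl ⟨by omega,
          by rwa [show (m - 1) / 2 = m / 2 from by omega]⟩))
      · simp only
        rw [if_pos (by omega)]
        omega
  · intro v hv
    rcases mem_oplus.mp hv with ⟨h1, h2⟩ | ⟨h1, h2⟩
    · obtain ⟨a, rfl⟩ : ∃ a, v = 2 * a := ⟨v / 2, by omega⟩
      rw [show 2 * a / 2 = a from by omega] at h2
      have e : (fun n => if n % 2 = 0 then n + 1 else n - 1) (2 * a) = 2 * a + 1 := by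
        beta_reduce; split_ifs <;> omega
      rw [e, oplus_parent_even h2, oplus_parent_odd h2]
      cases h : A.parent a with
      | none => rfl
      | some p =>
        simp only [Option.map_some]
        congr 1
        beta_reduce
        split_ifs <;> omega
    · obtain ⟨b, rfl⟩ : ∃ b, v = 2 * b + 1 := ⟨v / 2, by omega⟩
      rw [show (2 * b + 1) / 2 = b from by omega] at h2
      have e : (fun n => if n % 2 = 0 then n + 1 else n - 1) (2 * b + 1) = 2 * b := by
        beta_reduce; split_ifs <;> omega
      rw [e, oplus_parent_odd h2, oplus_parent_even h2]
      cases h : B.parent b with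
      | none => rfl
      | some p =>
        simp only [Option.map_some]
        congr 1
        beta_reduce
        split_ifs <;> omega

end Forest

namespace Forest

lemma mem_oplus3L {A B C : Forest} {n : ℕ} :
    n ∈ (oplus (oplus A B) C).verts ↔
      (n % 4 = 0 ∧ n / 4 ∈ A.verts) ∨ (n % 4 = 2 ∧ n / 4 ∈ B.verts) ∨
        (n % 2 = 1 ∧ n / 2 ∈ C.verts) := by
  rw [mem_oplus, mem_oplus]
  rw [show n / 2 / 2 = n / 4 from by omega]
  constructor
  · rintro (⟨e, (⟨e2, m⟩ | ⟨e2, m⟩)⟩ | ⟨e, m⟩)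
    · exact Or.inl ⟨by omega, m⟩
    · exact Or.inr (Or.inl ⟨by omega, m⟩)
    · exact Or.inr (Or.inr ⟨e, m⟩)
  · rintro (⟨e, m⟩ | ⟨e, m⟩ | ⟨e, m⟩)
    · exact Or.inl ⟨by omega, Or.inl ⟨by omega, m⟩⟩
    · exact Or.inl ⟨by omega, Or.inr ⟨by omega, m⟩⟩
    · exact Or.inr ⟨e, m⟩

lemma mem_oplus3R {A B C : Forest} {n : ℕ} :
    n ∈ (oplus A (oplus B C)).verts ↔
      (n % 2 = 0 ∧ n / 2 ∈ A.verts) ∨ (n % 4 = 1 ∧ n / 4 ∈ B.verts) ∨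
        (n % 4 = 3 ∧ n / 4 ∈ C.verts) := by
  rw [mem_oplus, mem_oplus]
  rw [show n / 2 / 2 = n / 4 from by omega]
  constructor
  · rintro (⟨e, m⟩ | ⟨e, (⟨e2, m⟩ | ⟨e2, m⟩)⟩)
    · exact Or.inl ⟨e, m⟩
    · exact Or.inr (Or.inl ⟨by omega, m⟩)
    · exact Or.inr (Or.inr ⟨by omega, m⟩)
  · rintro (⟨e, m⟩ | ⟨e, m⟩ | ⟨e, m⟩)
    · exact Or.inl ⟨e, m⟩
    · exact Or.inr ⟨by omega, Or.inl ⟨by omega, m⟩⟩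
    · exact Or.inr ⟨by omega, Or.inr ⟨by omega, m⟩⟩

lemma iso_oplus_assoc (A B C : Forest) :
    Iso (oplus (oplus A B) C) (oplus A (oplus B C)) := by
  refine ⟨fun n => if n % 4 = 0 then n / 2 else if n % 4 = 2 then n - 1 else 2 * n + 1,
    ⟨?_, ?_, ?_⟩, ?_⟩
  · intro n hn
    have hn' := mem_oplus3L.mp (Finset.mem_coe.mp hn)
    simp only [Finset.mem_coe]
    rcases hn' with ⟨h1, h2⟩ | ⟨h1, h2⟩ | ⟨h1, h2⟩
    · rw [if_pos h1]
      exact mem_oplus3R.mpr (Or.inl ⟨by omega, by rwa [show n / 2 / 2 = n / 4 from by omega]⟩)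
    · rw [if_neg (by omega), if_pos h1]
      exact mem_oplus3R.mpr (Or.inr (Or.inl ⟨by omega, by rwa [show (n - 1) / 4 = n / 4 from by omega]⟩))
    · rw [if_neg (by omega), if_neg (by omega)]
      exact mem_oplus3R.mpr (Or.inr (Or.inr ⟨by omega, by rwa [show (2 * n + 1) / 4 = n / 2 from by omega]⟩))
  · intro x hx y hy hxy
    have hx' := mem_oplus3L.mp (Finset.mem_coe.mp hx)
    have hy' := mem_oplus3L.mp (Finset.mem_coe.mp hy)
    simp only at hxy
    have px : x % 4 = 0 ∨ x % 4 = 2 ∨ x % 2 = 1 := by rcases hx' with ⟨h,_⟩|⟨h,_⟩|⟨h,_⟩ <;> omega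
    have py : y % 4 = 0 ∨ y % 4 = 2 ∨ y % 2 = 1 := by rcases hy' with ⟨h,_⟩|⟨h,_⟩|⟨h,_⟩ <;> omega
    split_ifs at hxy <;> omega
  · intro m hm
    have hm' := mem_oplus3R.mp (Finset.mem_coe.mp hm)
    rcases hm' with ⟨h1, h2⟩ | ⟨h1, h2⟩ | ⟨h1, h2⟩
    · refine ⟨2 * m, Finset.mem_coe.mpr (mem_oplus3L.mpr (Or.inl ⟨by omega,
        by rwa [show 2 * m / 4 = m / 2 from by omega]⟩)), ?_⟩
      beta_reduce
      rw [if_pos (by omega)]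
      omega
    · refine ⟨m + 1, Finset.mem_coe.mpr (mem_oplus3L.mpr (Or.inr (Or.inl ⟨by omega,
        by rwa [show (m + 1) / 4 = m / 4 from by omega]⟩))), ?_⟩
      beta_reduce
      rw [if_neg (by omega), if_pos (by omega)]
      omega
    · refine ⟨m / 2, Finset.mem_coe.mpr (mem_oplus3L.mpr (Or.inr (Or.inr ⟨by omega,
        by rwa [show m / 2 / 2 = m / 4 from by omega]⟩))), ?_⟩
      beta_reduce
      rw [if_neg (by omega), if_neg (by omega)]
      omega
  · intro v hv
    rcases mem_oplus3L.mp hv with ⟨h1, h2⟩ | ⟨h1, h2⟩ | ⟨h1, h2⟩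
    · obtain ⟨a, rfl⟩ : ∃ a, v = 2 * (2 * a) := ⟨v / 4, by omega⟩
      rw [show 2 * (2 * a) / 4 = a from by omega] at h2
      have e : (fun n => if n % 4 = 0 then n / 2 else if n % 4 = 2 then n - 1 else 2 * n + 1)
          (2 * (2 * a)) = 2 * a := by beta_reduce; split_ifs <;> omega
      rw [e, oplus_parent_even (mem_oplus_even.mpr h2), oplus_parent_even h2,
        oplus_parent_even h2, Option.map_map]
      cases h : A.parent a with
      | none => rfl
      | some p =>
        simp only [Option.map_some, Function.comp]
        congr 1
        beta_reduce
        split_ifs <;> omega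
    · obtain ⟨b, rfl⟩ : ∃ b, v = 2 * (2 * b + 1) := ⟨v / 4, by omega⟩
      rw [show 2 * (2 * b + 1) / 4 = b from by omega] at h2
      have e : (fun n => if n % 4 = 0 then n / 2 else if n % 4 = 2 then n - 1 else 2 * n + 1)
          (2 * (2 * b + 1)) = 2 * (2 * b) + 1 := by beta_reduce; split_ifs <;> omega
      rw [e, oplus_parent_even (mem_oplus_odd.mpr h2), oplus_parent_odd h2,
        oplus_parent_odd (mem_oplus_even.mpr h2), oplus_parent_even h2,
        Option.map_map, Option.map_map, Option.map_map]
      cases h : B.parent b with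
      | none => rfl
      | some p =>
        simp only [Option.map_some, Function.comp]
        congr 1
        beta_reduce
        split_ifs <;> omega
    · obtain ⟨c, rfl⟩ : ∃ c, v = 2 * c + 1 := ⟨v / 2, by omega⟩
      rw [show (2 * c + 1) / 2 = c from by omega] at h2
      have e : (fun n => if n % 4 = 0 then n / 2 else if n % 4 = 2 then n - 1 else 2 * n + 1)
          (2 * c + 1) = 2 * (2 * c + 1) + 1 := by beta_reduce; split_ifs <;> omega
      rw [e, oplus_parent_odd h2, oplus_parent_odd (mem_oplus_odd.mpr h2),
        oplus_parent_odd h2, Option.map_map, Option.map_map]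
      cases h : C.parent c with
      | none => rfl
      | some p =>
        simp only [Option.map_some, Function.comp]
        congr 1
        beta_reduce
        split_ifs <;> omega

end Forest

namespace Forest

/-- Encode a pair of label sets into the even/odd labels of a direct sum. -/
def enc (S T : Finset ℕ) : Finset ℕ :=
  S.image (fun v => 2 * v) ∪ T.image (fun v => 2 * v + 1)

/-- Decode the even part. -/
def dec0 (S : Finset ℕ) : Finset ℕ :=
  (S.filter (fun n => n % 2 = 0)).image (fun n => n / 2)

/-- Decode the odd part. -/
def dec1 (S : Finset ℕ) : Finset ℕ :=
  (S.filter (fun n => n % 2 = 1)).image (fun n => n / 2)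

lemma mem_dec0 {S : Finset ℕ} {a : ℕ} : a ∈ dec0 S ↔ 2 * a ∈ S := by
  simp only [dec0, Finset.mem_image, Finset.mem_filter]
  constructor
  · rintro ⟨n, ⟨hn, hp⟩, rfl⟩
    rwa [show 2 * (n / 2) = n from by omega]
  · intro h
    exact ⟨2 * a, ⟨h, by omega⟩, by omega⟩

lemma mem_dec1 {S : Finset ℕ} {b : ℕ} : b ∈ dec1 S ↔ 2 * b + 1 ∈ S := by
  simp only [dec1, Finset.mem_image, Finset.mem_filter]
  constructor
  · rintro ⟨n, ⟨hn, hp⟩, rfl⟩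
    rwa [show 2 * (n / 2) + 1 = n from by omega]
  · intro h
    exact ⟨2 * b + 1, ⟨h, by omega⟩, by omega⟩

lemma mem_enc {S T : Finset ℕ} {n : ℕ} :
    n ∈ enc S T ↔ (n % 2 = 0 ∧ n / 2 ∈ S) ∨ (n % 2 = 1 ∧ n / 2 ∈ T) := by
  simp only [enc, Finset.mem_union, Finset.mem_image]
  constructor
  · rintro (⟨v, hv, rfl⟩ | ⟨v, hv, rfl⟩)
    · exact Or.inl ⟨by omega, by rwa [show 2 * v / 2 = v from by omega]⟩
    · exact Or.inr ⟨by omega, by rwa [show (2 * v + 1) / 2 = v from by omega]⟩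
  · rintro (⟨h1, h2⟩ | ⟨h1, h2⟩)
    · exact Or.inl ⟨n / 2, h2, by omega⟩
    · exact Or.inr ⟨n / 2, h2, by omega⟩

lemma enc_dec (S : Finset ℕ) : enc (dec0 S) (dec1 S) = S := by
  ext n
  rw [mem_enc]
  constructor
  · rintro (⟨h1, h2⟩ | ⟨h1, h2⟩)
    · rw [mem_dec0] at h2; rwa [show 2 * (n / 2) = n from by omega] at h2
    · rw [mem_dec1] at h2; rwa [show 2 * (n / 2) + 1 = n from by omega] at h2
  · intro h
    rcases (show n % 2 = 0 ∨ n % 2 = 1 from by omega) with he | ho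
    · exact Or.inl ⟨he, mem_dec0.mpr (by rwa [show 2 * (n / 2) = n from by omega])⟩
    · exact Or.inr ⟨ho, mem_dec1.mpr (by rwa [show 2 * (n / 2) + 1 = n from by omega])⟩

lemma dec0_enc (S T : Finset ℕ) : dec0 (enc S T) = S := by
  ext a
  rw [mem_dec0, mem_enc]
  constructor
  · rintro (⟨h1, h2⟩ | ⟨h1, h2⟩)
    · rwa [show 2 * a / 2 = a from by omega] at h2
    · omega
  · intro h
    exact Or.inl ⟨by omega, by rwa [show 2 * a / 2 = a from by omega]⟩

lemma dec1_enc (S T : Finset ℕ) : dec1 (enc S T) = T := by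
  ext b
  rw [mem_dec1, mem_enc]
  constructor
  · rintro (⟨h1, h2⟩ | ⟨h1, h2⟩)
    · omega
    · rwa [show (2 * b + 1) / 2 = b from by omega] at h2
  · intro h
    exact Or.inr ⟨by omega, by rwa [show (2 * b + 1) / 2 = b from by omega]⟩

lemma dec0_subset {A B : Forest} {S : Finset ℕ} (hS : S ⊆ (oplus A B).verts) :
    dec0 S ⊆ A.verts := fun a ha => mem_oplus_even.mp (hS (mem_dec0.mp ha))

lemma dec1_subset {A B : Forest} {S : Finset ℕ} (hS : S ⊆ (oplus A B).verts) :
    dec1 S ⊆ B.verts := fun b hb => mem_oplus_odd.mp (hS (mem_dec1.mp hb))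

lemma enc_subset {A B : Forest} {S T : Finset ℕ} (hS : S ⊆ A.verts) (hT : T ⊆ B.verts) :
    enc S T ⊆ (oplus A B).verts := by
  intro n hn
  rcases mem_enc.mp hn with ⟨h1, h2⟩ | ⟨h1, h2⟩
  · exact mem_oplus.mpr (Or.inl ⟨h1, hS h2⟩)
  · exact mem_oplus.mpr (Or.inr ⟨h1, hT h2⟩)

lemma isSub_oplus_iff {A B : Forest} {S : Finset ℕ} (hS : S ⊆ (oplus A B).verts) :
    (oplus A B).IsSub S ↔ A.IsSub (dec0 S) ∧ B.IsSub (dec1 S) := by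
  constructor
  · rintro ⟨_, hcl⟩
    refine ⟨⟨dec0_subset hS, ?_⟩, ⟨dec1_subset hS, ?_⟩⟩
    · intro v hv w hw hp
      apply mem_dec0.mpr
      apply hcl (2 * v) (mem_dec0.mp hv) (2 * w) (mem_oplus_even.mpr hw)
      rw [oplus_parent_even hw, hp]; rfl
    · intro v hv w hw hp
      apply mem_dec1.mpr
      apply hcl (2 * v + 1) (mem_dec1.mp hv) (2 * w + 1) (mem_oplus_odd.mpr hw)
      rw [oplus_parent_odd hw, hp]; rfl
  · rintro ⟨⟨_, hA⟩, ⟨_, hB⟩⟩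
    refine ⟨hS, ?_⟩
    intro v hv w hw hp
    rcases mem_oplus.mp hw with ⟨h1, h2⟩ | ⟨h1, h2⟩
    · obtain ⟨a, rfl⟩ : ∃ a, w = 2 * a := ⟨w / 2, by omega⟩
      rw [show 2 * a / 2 = a from by omega] at h2
      rw [oplus_parent_even h2] at hp
      obtain ⟨q, hq, hqv⟩ := Option.map_eq_some_iff.mp hp
      have hvS : v / 2 ∈ dec0 S := mem_dec0.mpr (by rwa [show 2 * (v / 2) = v from by omega])
      have := hA (v / 2) hvS a h2 (by rwa [show v / 2 = q from by omega])
      exact mem_dec0.mp this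
    · obtain ⟨b, rfl⟩ : ∃ b, w = 2 * b + 1 := ⟨w / 2, by omega⟩
      rw [show (2 * b + 1) / 2 = b from by omega] at h2
      rw [oplus_parent_odd h2] at hp
      obtain ⟨q, hq, hqv⟩ := Option.map_eq_some_iff.mp hp
      have hvS : v / 2 ∈ dec1 S := mem_dec1.mpr (by rwa [show 2 * (v / 2) + 1 = v from by omega])
      have := hB (v / 2) hvS b h2 (by rwa [show v / 2 = q from by omega])
      exact mem_dec1.mp this

end Forest

namespace Forest

lemma restrict_verts (F : Forest) (S : Finset ℕ) : (F.restrict S).verts = S ∩ F.verts := rfl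

lemma quot_verts (F : Forest) (S : Finset ℕ) : (F.quot S).verts = F.verts \ S := rfl

lemma restrict_parent (F : Forest) (S : Finset ℕ) (v : ℕ) :
    (F.restrict S).parent v = (F.parent v).bind
      (fun p => if v ∈ S ∩ F.verts ∧ p ∈ S ∩ F.verts then some p else none) := rfl

lemma quot_parent (F : Forest) (S : Finset ℕ) (v : ℕ) :
    (F.quot S).parent v = (F.parent v).bind
      (fun p => if v ∈ F.verts \ S ∧ p ∈ F.verts \ S then some p else none) := rfl

lemma restrict_oplus_iso {A B : Forest} {S : Finset ℕ} (hS : S ⊆ (oplus A B).verts) :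
    Iso ((oplus A B).restrict S) (oplus (A.restrict (dec0 S)) (B.restrict (dec1 S))) := by
  apply iso_of_eq
  · ext n
    rw [restrict_verts, Finset.inter_eq_left.mpr hS, mem_oplus, restrict_verts, restrict_verts,
      Finset.mem_inter, Finset.mem_inter, mem_dec0, mem_dec1]
    constructor
    · intro hn
      rcases mem_oplus.mp (hS hn) with ⟨h1, h2⟩ | ⟨h1, h2⟩
      · exact Or.inl ⟨h1, ⟨by rwa [show 2 * (n / 2) = n from by omega], h2⟩⟩
      · exact Or.inr ⟨h1, ⟨by rwa [show 2 * (n / 2) + 1 = n from by omega], h2⟩⟩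
    · rintro (⟨h1, ⟨h2, _⟩⟩ | ⟨h1, ⟨h2, _⟩⟩)
      · rwa [show 2 * (n / 2) = n from by omega] at h2
      · rwa [show 2 * (n / 2) + 1 = n from by omega] at h2
  · intro v hv
    rw [restrict_verts, Finset.inter_eq_left.mpr hS] at hv
    rcases mem_oplus.mp (hS hv) with ⟨h1, h2⟩ | ⟨h1, h2⟩
    · obtain ⟨a, rfl⟩ : ∃ a, v = 2 * a := ⟨v / 2, by omega⟩
      rw [show 2 * a / 2 = a from by omega] at h2
      have ha0 : a ∈ dec0 S := mem_dec0.mpr hv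
      rw [restrict_parent, oplus_parent_even h2,
        oplus_parent_even (show a ∈ (A.restrict (dec0 S)).verts from
          Finset.mem_inter.mpr ⟨ha0, h2⟩), restrict_parent]
      cases h : A.parent a with
      | none => rfl
      | some p =>
        have hpA : p ∈ A.verts := A.parent_mem a h2 p h
        simp only [Option.map_some, Option.bind_some]
        by_cases hc : 2 * p ∈ S
        · rw [if_pos ⟨Finset.mem_inter.mpr ⟨hv, hS hv⟩,
            Finset.mem_inter.mpr ⟨hc, mem_oplus_even.mpr hpA⟩⟩,
            if_pos ⟨Finset.mem_inter.mpr ⟨ha0, h2⟩,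
            Finset.mem_inter.mpr ⟨mem_dec0.mpr hc, hpA⟩⟩]
          rfl
        · rw [if_neg (fun hh => hc (Finset.mem_inter.mp hh.2).1),
            if_neg (fun hh => hc (mem_dec0.mp (Finset.mem_inter.mp hh.2).1))]
          rfl
    · obtain ⟨b, rfl⟩ : ∃ b, v = 2 * b + 1 := ⟨v / 2, by omega⟩
      rw [show (2 * b + 1) / 2 = b from by omega] at h2
      have hb1 : b ∈ dec1 S := mem_dec1.mpr hv
      rw [restrict_parent, oplus_parent_odd h2,
        oplus_parent_odd (show b ∈ (B.restrict (dec1 S)).verts from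
          Finset.mem_inter.mpr ⟨hb1, h2⟩), restrict_parent]
      cases h : B.parent b with
      | none => rfl
      | some p =>
        have hpB : p ∈ B.verts := B.parent_mem b h2 p h
        simp only [Option.map_some, Option.bind_some]
        by_cases hc : 2 * p + 1 ∈ S
        · rw [if_pos ⟨Finset.mem_inter.mpr ⟨hv, hS hv⟩,
            Finset.mem_inter.mpr ⟨hc, mem_oplus_odd.mpr hpB⟩⟩,
            if_pos ⟨Finset.mem_inter.mpr ⟨hb1, h2⟩,
            Finset.mem_inter.mpr ⟨mem_dec1.mpr hc, hpB⟩⟩]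
          rfl
        · rw [if_neg (fun hh => hc (Finset.mem_inter.mp hh.2).1),
            if_neg (fun hh => hc (mem_dec1.mp (Finset.mem_inter.mp hh.2).1))]
          rfl

lemma quot_oplus_iso {A B : Forest} {S : Finset ℕ} (hS : S ⊆ (oplus A B).verts) :
    Iso ((oplus A B).quot S) (oplus (A.quot (dec0 S)) (B.quot (dec1 S))) := by
  apply iso_of_eq
  · ext n
    rw [quot_verts, Finset.mem_sdiff, mem_oplus, mem_oplus, quot_verts, quot_verts,
      Finset.mem_sdiff, Finset.mem_sdiff, mem_dec0, mem_dec1]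
    constructor
    · rintro ⟨(⟨h1, h2⟩ | ⟨h1, h2⟩), hn⟩
      · exact Or.inl ⟨h1, ⟨h2, by rwa [show 2 * (n / 2) = n from by omega]⟩⟩
      · exact Or.inr ⟨h1, ⟨h2, by rwa [show 2 * (n / 2) + 1 = n from by omega]⟩⟩
    · rintro (⟨h1, ⟨h2, h3⟩⟩ | ⟨h1, ⟨h2, h3⟩⟩)
      · exact ⟨Or.inl ⟨h1, h2⟩, by rwa [show 2 * (n / 2) = n from by omega] at h3⟩
      · exact ⟨Or.inr ⟨h1, h2⟩, by rwa [show 2 * (n / 2) + 1 = n from by omega] at h3⟩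
  · intro v hv
    rw [quot_verts, Finset.mem_sdiff] at hv
    obtain ⟨hvV, hvS⟩ := hv
    rcases mem_oplus.mp hvV with ⟨h1, h2⟩ | ⟨h1, h2⟩
    · obtain ⟨a, rfl⟩ : ∃ a, v = 2 * a := ⟨v / 2, by omega⟩
      rw [show 2 * a / 2 = a from by omega] at h2
      have ha0 : a ∉ dec0 S := fun hh => hvS (mem_dec0.mp hh)
      rw [quot_parent, oplus_parent_even h2,
        oplus_parent_even (show a ∈ (A.quot (dec0 S)).verts from
          Finset.mem_sdiff.mpr ⟨h2, ha0⟩), quot_parent]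
      cases h : A.parent a with
      | none => rfl
      | some p =>
        have hpA : p ∈ A.verts := A.parent_mem a h2 p h
        simp only [Option.map_some, Option.bind_some]
        by_cases hc : 2 * p ∈ S
        · rw [if_neg (fun hh => (Finset.mem_sdiff.mp hh.2).2 hc),
            if_neg (fun hh => (Finset.mem_sdiff.mp hh.2).2 (mem_dec0.mpr hc))]
          rfl
        · rw [if_pos ⟨Finset.mem_sdiff.mpr ⟨hvV, hvS⟩,
            Finset.mem_sdiff.mpr ⟨mem_oplus_even.mpr hpA, hc⟩⟩,
            if_pos ⟨Finset.mem_sdiff.mpr ⟨h2, ha0⟩,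
            Finset.mem_sdiff.mpr ⟨hpA, fun hh => hc (mem_dec0.mp hh)⟩⟩]
          rfl
    · obtain ⟨b, rfl⟩ : ∃ b, v = 2 * b + 1 := ⟨v / 2, by omega⟩
      rw [show (2 * b + 1) / 2 = b from by omega] at h2
      have hb1 : b ∉ dec1 S := fun hh => hvS (mem_dec1.mp hh)
      rw [quot_parent, oplus_parent_odd h2,
        oplus_parent_odd (show b ∈ (B.quot (dec1 S)).verts from
          Finset.mem_sdiff.mpr ⟨h2, hb1⟩), quot_parent]
      cases h : B.parent b with
      | none => rfl
      | some p =>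
        have hpB : p ∈ B.verts := B.parent_mem b h2 p h
        simp only [Option.map_some, Option.bind_some]
        by_cases hc : 2 * p + 1 ∈ S
        · rw [if_neg (fun hh => (Finset.mem_sdiff.mp hh.2).2 hc),
            if_neg (fun hh => (Finset.mem_sdiff.mp hh.2).2 (mem_dec1.mpr hc))]
          rfl
        · rw [if_pos ⟨Finset.mem_sdiff.mpr ⟨hvV, hvS⟩,
            Finset.mem_sdiff.mpr ⟨mem_oplus_odd.mpr hpB, hc⟩⟩,
            if_pos ⟨Finset.mem_sdiff.mpr ⟨h2, hb1⟩,
            Finset.mem_sdiff.mpr ⟨hpB, fun hh => hc (mem_dec1.mp hh)⟩⟩]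
          rfl

end Forest

open Forest in
/-- The coproduct `Δ(f)(F, G) = f(F ⊕ G)` on `H_LRF` is
cocommutative and coassociative, is an algebra homomorphism for the convolution
product, and takes the unit to the unit ⊗ unit; hence `H_LRF` is a cocommutative
bialgebra (a graded connected one, so a Hopf algebra). -/
theorem hall_coproduct_bialgebra :
    (∀ f : Forest → ℚ, Invariant f → FinSupp f →
      ∀ A B, f (oplus A B) = f (oplus B A)) ∧
    (∀ f : Forest → ℚ, Invariant f → FinSupp f →
      ∀ A B C, f (oplus (oplus A B) C) = f (oplus A (oplus B C))) ∧
    (∀ f g : Forest → ℚ, Invariant f → FinSupp f → Invariant g → FinSupp g →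
      ∀ A B, conv f g (oplus A B) =
        conv2 (fun A' B' => f (oplus A' B')) (fun A' B' => g (oplus A' B')) A B) ∧
    (∀ A B, unitF (oplus A B) = unitF A * unitF B) := by
  refine ⟨?_, ?_, ?_, ?_⟩
  · intro f hf _ A B
    exact hf _ _ (iso_oplus_comm A B)
  · intro f hf _ A B C
    exact hf _ _ (iso_oplus_assoc A B C)
  · intro f g hf _ hg _ A B
    simp only [conv, conv2]
    rw [← Finset.sum_product']
    refine Finset.sum_nbij' (fun S => (dec0 S, dec1 S)) (fun p => enc p.1 p.2) ?_ ?_ ?_ ?_ ?_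
    · intro S hS
      rw [Finset.mem_powerset] at hS
      exact Finset.mem_product.mpr ⟨Finset.mem_powerset.mpr (dec0_subset hS),
        Finset.mem_powerset.mpr (dec1_subset hS)⟩
    · intro p hp
      obtain ⟨h1, h2⟩ := Finset.mem_product.mp hp
      exact Finset.mem_powerset.mpr
        (enc_subset (Finset.mem_powerset.mp h1) (Finset.mem_powerset.mp h2))
    · intro S _
      exact enc_dec S
    · intro p _
      exact Prod.ext (dec0_enc _ _) (dec1_enc _ _)
    · intro S hSm
      have hS := Finset.mem_powerset.mp hSm
      by_cases hsub : (oplus A B).IsSub S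
      · rw [if_pos hsub, if_pos ((isSub_oplus_iff hS).mp hsub)]
        rw [hf _ _ (restrict_oplus_iso hS), hg _ _ (quot_oplus_iso hS)]
      · rw [if_neg hsub, if_neg (fun hh => hsub ((isSub_oplus_iff hS).mpr hh))]
  · intro A B
    simp only [unitF, oplus, Finset.union_eq_empty, Finset.image_eq_empty]
    by_cases h1 : A.verts = ∅ <;> by_cases h2 : B.verts = ∅ <;> simp [h1, h2]
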